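/- Let $E_1, E_2, \dots$ be events in a probability space. Suppose there exists $p > 0$ with $\mathbb{P}(E_i) \geq p$ for all $i$, and suppose $|\mathbb{P}(E_i \cap E_k) - \mathbb{P}(E_i)\mathbb{P}(E_k)| \leq 1/i^2$ for all $i < k$. Then $\mathbb{P}(\limsup_{n\to\infty} E_n) = 1$. -/

import Mathlib

open MeasureTheory Filter

open scoped ENNReal

section AuxBC


variable {Ω : Type*} [MeasurableSpace Ω]

lemma lintegral_sq_cauchy (μ : Measure Ω) {f g : Ω → ℝ≥0∞}
    (hf : AEMeasurable f μ) (hg : AEMeasurable g μ) :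
    (∫⁻ a, f a * g a ∂μ) ^ 2 ≤ (∫⁻ a, f a ^ 2 ∂μ) * (∫⁻ a, g a ^ 2 ∂μ) := by
  have hpq : Real.HolderConjugate 2 2 := Real.HolderConjugate.two_two
  have h := ENNReal.lintegral_mul_le_Lp_mul_Lq μ hpq hf hg
  simp only [Pi.mul_apply] at h
  have h2 := pow_le_pow_left₀ zero_le h 2
  calc (∫⁻ a, f a * g a ∂μ) ^ 2
      ≤ ((∫⁻ a, f a ^ (2:ℝ) ∂μ) ^ (1/2:ℝ) * (∫⁻ a, g a ^ (2:ℝ) ∂μ) ^ (1/2:ℝ)) ^ 2 := h2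
    _ = (∫⁻ a, f a ^ 2 ∂μ) * (∫⁻ a, g a ^ 2 ∂μ) := by
        rw [mul_pow, ← ENNReal.rpow_natCast (_ ^ (1/2:ℝ)) 2, ← ENNReal.rpow_natCast (_ ^ (1/2:ℝ)) 2,
          ← ENNReal.rpow_mul, ← ENNReal.rpow_mul]
        norm_num

lemma chung_erdos (μ : Measure Ω) (E : ℕ → Set Ω) (hE : ∀ j, MeasurableSet (E j)) (I : Finset ℕ) :
    (∑ i ∈ I, μ (E i)) ^ 2 ≤ μ (⋃ i ∈ I, E i) * ∑ i ∈ I, ∑ k ∈ I, μ (E i ∩ E k) := by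
  set U : Set Ω := ⋃ i ∈ I, E i with hU
  have hUm : MeasurableSet U := I.measurableSet_biUnion fun i _ => hE i
  set f : Ω → ℝ≥0∞ := fun ω => ∑ i ∈ I, (E i).indicator 1 ω with hf
  set g : Ω → ℝ≥0∞ := U.indicator 1 with hg
  have hfm : Measurable f := Finset.measurable_sum _ fun i _ => measurable_one.indicator (hE i)
  have hgm : Measurable g := measurable_one.indicator hUm
  have hfg : ∀ ω, f ω * g ω = f ω := by
    intro ω
    by_cases hω : ω ∈ U
    · simp [hg, Set.indicator_of_mem hω]
    · have : f ω = 0 := by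
        apply Finset.sum_eq_zero
        intro i hi
        exact Set.indicator_of_notMem (fun h => hω (Set.mem_biUnion hi h)) _
      simp [this]
  have hintf : ∫⁻ a, f a ∂μ = ∑ i ∈ I, μ (E i) := by
    rw [hf]
    rw [lintegral_finset_sum _ fun i _ => measurable_one.indicator (hE i)]
    simp [lintegral_indicator_one (hE _)]
  have hintf2 : ∫⁻ a, f a ^ 2 ∂μ = ∑ i ∈ I, ∑ k ∈ I, μ (E i ∩ E k) := by
    have : ∀ a, f a ^ 2 = ∑ i ∈ I, ∑ k ∈ I, (E i ∩ E k).indicator 1 a := by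
      intro a
      rw [sq, hf, Finset.sum_mul_sum]
      refine Finset.sum_congr rfl fun i _ => Finset.sum_congr rfl fun k _ => ?_
      rw [Set.inter_indicator_one]; rfl
    simp_rw [this]
    rw [lintegral_finset_sum _ fun i _ => Finset.measurable_sum _
      fun k _ => measurable_one.indicator ((hE i).inter (hE k))]
    refine Finset.sum_congr rfl fun i _ => ?_
    rw [lintegral_finset_sum _ fun k _ => measurable_one.indicator ((hE i).inter (hE k))]
    simp [lintegral_indicator_one ((hE _).inter (hE _))]
  have hintg2 : ∫⁻ a, g a ^ 2 ∂μ = μ U := by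
    have : ∀ a, g a ^ 2 = g a := by
      intro a
      by_cases hω : a ∈ U <;> simp [hg, Set.indicator_of_mem, Set.indicator_of_notMem, hω]
    simp_rw [this, hg, lintegral_indicator_one hUm]
  calc (∑ i ∈ I, μ (E i)) ^ 2 = (∫⁻ a, f a * g a ∂μ) ^ 2 := by simp_rw [hfg, hintf]
    _ ≤ (∫⁻ a, f a ^ 2 ∂μ) * (∫⁻ a, g a ^ 2 ∂μ) :=
        lintegral_sq_cauchy μ hfm.aemeasurable hgm.aemeasurable
    _ = μ U * ∑ i ∈ I, ∑ k ∈ I, μ (E i ∩ E k) := by rw [hintf2, hintg2, mul_comm]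

lemma sum_inv_sq_le (M : ℕ) : ∑ i ∈ Finset.range M, 1 / ((i : ℝ) + 1) ^ 2 ≤ 2 := by
  have h : ∀ M : ℕ, ∑ i ∈ Finset.range M, 1 / ((i : ℝ) + 1) ^ 2 ≤ 2 - 2 / ((M : ℝ) + 1) := by
    intro M
    induction M with
    | zero => norm_num
    | succ M ih =>
      rw [Finset.sum_range_succ]
      have hx : (0:ℝ) < (M:ℝ) + 1 := by positivity
      have hy : (0:ℝ) < (M:ℝ) + 2 := by positivity
      have key : 1 / ((M:ℝ) + 1) ^ 2 ≤ 2 / ((M:ℝ) + 1) - 2 / ((M:ℝ) + 2) := by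
        rw [div_sub_div _ _ (ne_of_gt hx) (ne_of_gt hy),
          div_le_div_iff₀ (by positivity) (by positivity)]
        nlinarith [hx, hy]
      have h2 : ((M + 1 : ℕ) : ℝ) + 1 = (M:ℝ) + 2 := by push_cast; ring
      rw [h2]
      linarith [key, ih]
  refine le_trans (h M) ?_
  have : 0 ≤ 2 / ((M : ℝ) + 1) := by positivity
  linarith

end AuxBC

/-- If the events have probabilities uniformly bounded below by `p > 0` and the
correlations satisfy `|P(E i ∩ E k) - P(E i)P(E k)| ≤ 1/i²` for `i < k`, then
almost surely infinitely many of the events occur. -/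
theorem borel_cantelli_correlation {Ω : Type*} [MeasurableSpace Ω]
    (μ : Measure Ω) [IsProbabilityMeasure μ]
    (E : ℕ → Set Ω) (hE : ∀ j, MeasurableSet (E j))
    (p : ℝ) (hp : 0 < p) (hlow : ∀ i, p ≤ (μ (E i)).toReal)
    (hcorr : ∀ i k : ℕ, i < k →
      |(μ (E i ∩ E k)).toReal - (μ (E i)).toReal * (μ (E k)).toReal| ≤ 1 / (i + 1 : ℝ) ^ 2) :
    μ (limsup E atTop) = 1 := by
  -- probabilities are at most 1
  have ha1 : ∀ i, (μ (E i)).toReal ≤ 1 := by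
    intro i
    have := prob_le_one (μ := μ) (s := E i)
    simpa using ENNReal.toReal_mono ENNReal.one_ne_top this
  have ha0 : ∀ i, 0 ≤ (μ (E i)).toReal := fun i => ENNReal.toReal_nonneg
  -- Step 1: every tail union has full measure
  have key : ∀ n : ℕ, μ (⋃ k, ⋃ (_ : n ≤ k), E k) = 1 := by
    intro n
    set U : Set Ω := ⋃ k, ⋃ (_ : n ≤ k), E k with hUdef
    have hUm : MeasurableSet U := MeasurableSet.iUnion fun k => MeasurableSet.iUnion fun _ => hE k
    have main : ∀ m : ℕ, 1 - 5 / (p ^ 2 * ((m : ℝ) + 1)) ≤ (μ U).toReal := by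
      intro m
      set I : Finset ℕ := Finset.Icc n (n + m) with hIdef
      have hcard : I.card = m + 1 := by rw [hIdef, Nat.card_Icc]; omega
      set S : ℝ := ∑ i ∈ I, (μ (E i)).toReal with hSdef
      set N : ℝ := (m : ℝ) + 1 with hNdef
      have hN0 : (0:ℝ) < N := by positivity
      have hS_lb : p * N ≤ S := by
        have h1 : ∑ i ∈ I, p ≤ S := Finset.sum_le_sum fun i _ => hlow i
        have h2 : ∑ i ∈ I, p = p * N := by
          rw [Finset.sum_const, hcard, nsmul_eq_mul]; push_cast [hNdef]; ring
        linarith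
      -- real-valued Chung-Erdős
      set u : ℝ := (μ (⋃ i ∈ I, E i)).toReal with hudef
      set T : ℝ := ∑ i ∈ I, ∑ k ∈ I, (μ (E i ∩ E k)).toReal with hTdef
      have hCE : S ^ 2 ≤ u * T := by
        have hen := chung_erdos μ E hE I
        have hne : μ (⋃ i ∈ I, E i) * ∑ i ∈ I, ∑ k ∈ I, μ (E i ∩ E k) ≠ ⊤ :=
          ENNReal.mul_ne_top (measure_ne_top _ _)
            (ENNReal.sum_lt_top.2 fun i _ =>
              (ENNReal.sum_lt_top.2 fun k _ => measure_lt_top μ _)).ne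
        have e1 : (∑ i ∈ I, μ (E i)).toReal = S :=
          ENNReal.toReal_sum fun i _ => measure_ne_top μ _
        have e2 : (∑ i ∈ I, ∑ k ∈ I, μ (E i ∩ E k)).toReal = T := by
          rw [ENNReal.toReal_sum (fun i _ =>
            (ENNReal.sum_lt_top.2 fun k _ => measure_lt_top μ _).ne)]
          exact Finset.sum_congr rfl fun i _ =>
            ENNReal.toReal_sum fun k _ => measure_ne_top μ _
        have := ENNReal.toReal_mono hne hen
        rwa [ENNReal.toReal_pow, e1, ENNReal.toReal_mul, e2] at this
      -- bound T
      have hT_ub : T ≤ S ^ 2 + 5 * N := by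
        have hpair : ∀ i ∈ I, ∀ k ∈ I, (μ (E i ∩ E k)).toReal ≤
            (μ (E i)).toReal * (μ (E k)).toReal + 1 / ((i : ℝ) + 1) ^ 2 + 1 / ((k : ℝ) + 1) ^ 2
              + (if i = k then 1 else 0) := by
          intro i _ k _
          have hik0 : (0:ℝ) ≤ 1 / ((i : ℝ) + 1) ^ 2 := by positivity
          have hki0 : (0:ℝ) ≤ 1 / ((k : ℝ) + 1) ^ 2 := by positivity
          rcases lt_trichotomy i k with h | h | h
          · have := abs_le.1 (hcorr i k h)
            simp only [if_neg (Nat.ne_of_lt h)]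
            linarith [this.2]
          · subst h
            rw [if_pos rfl]
            have hb : (μ (E i ∩ E i)).toReal ≤ 1 := by
              have := prob_le_one (μ := μ) (s := E i ∩ E i)
              simpa using ENNReal.toReal_mono ENNReal.one_ne_top this
            nlinarith [hb, mul_self_nonneg ((μ (E i)).toReal), hik0]
          · have := abs_le.1 (hcorr k i h)
            rw [Set.inter_comm]
            simp only [if_neg (Nat.ne_of_gt h)]
            nlinarith [this.2]
        have hsum : T ≤ ∑ i ∈ I, ∑ k ∈ I,
            ((μ (E i)).toReal * (μ (E k)).toReal + 1 / ((i : ℝ) + 1) ^ 2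
              + 1 / ((k : ℝ) + 1) ^ 2 + (if i = k then 1 else 0)) :=
          Finset.sum_le_sum fun i hi => Finset.sum_le_sum fun k hk => hpair i hi k hk
        have hc_le : ∑ i ∈ I, 1 / ((i : ℝ) + 1) ^ 2 ≤ 2 := by
          refine le_trans (Finset.sum_le_sum_of_subset_of_nonneg
            (show I ⊆ Finset.range (n + m + 1) by
              intro x hx
              simp only [hIdef, Finset.mem_Icc] at hx
              simp only [Finset.mem_range]; omega)
            (fun i _ _ => by positivity)) (sum_inv_sq_le _)
        have e_aa : ∑ i ∈ I, ∑ k ∈ I, (μ (E i)).toReal * (μ (E k)).toReal = S ^ 2 := by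
          rw [hSdef, sq, Finset.sum_mul_sum]
        have e_ci : ∑ i ∈ I, ∑ k ∈ I, 1 / ((i : ℝ) + 1) ^ 2 ≤ 2 * N := by
          calc ∑ i ∈ I, ∑ k ∈ I, 1 / ((i : ℝ) + 1) ^ 2
              = N * ∑ i ∈ I, 1 / ((i : ℝ) + 1) ^ 2 := by
                rw [Finset.mul_sum]
                refine Finset.sum_congr rfl fun i _ => ?_
                rw [Finset.sum_const, hcard, nsmul_eq_mul, hNdef]; push_cast; ring
            _ ≤ N * 2 := mul_le_mul_of_nonneg_left hc_le hN0.le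
            _ = 2 * N := by ring
        have e_ck : ∑ i ∈ I, ∑ k ∈ I, 1 / ((k : ℝ) + 1) ^ 2 ≤ 2 * N := by
          calc ∑ i ∈ I, ∑ k ∈ I, 1 / ((k : ℝ) + 1) ^ 2
              ≤ ∑ _i ∈ I, (2:ℝ) := Finset.sum_le_sum fun i _ => hc_le
            _ = 2 * N := by
                rw [Finset.sum_const, hcard, nsmul_eq_mul, hNdef]; push_cast; ring
        have e_d : ∑ i ∈ I, ∑ k ∈ I, (if i = k then (1:ℝ) else 0) = N := by
          have h1 : ∀ i ∈ I, ∑ k ∈ I, (if i = k then (1:ℝ) else 0) = 1 := by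
            intro i hi
            rw [Finset.sum_ite_eq I i (fun _ => (1:ℝ)), if_pos hi]
          rw [Finset.sum_congr rfl h1, Finset.sum_const, hcard, nsmul_eq_mul, hNdef]
          push_cast; ring
        have hsum2 : T ≤ (∑ i ∈ I, ∑ k ∈ I, (μ (E i)).toReal * (μ (E k)).toReal)
            + (∑ i ∈ I, ∑ k ∈ I, 1 / ((i : ℝ) + 1) ^ 2)
            + (∑ i ∈ I, ∑ k ∈ I, 1 / ((k : ℝ) + 1) ^ 2)
            + (∑ i ∈ I, ∑ k ∈ I, (if i = k then (1:ℝ) else 0)) := by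
          simpa only [Finset.sum_add_distrib] using hsum
        linarith
      -- conclude the lower bound on u
      have hu0 : 0 ≤ u := ENNReal.toReal_nonneg
      have hu1 : u ≤ 1 := by
        have := prob_le_one (μ := μ) (s := ⋃ i ∈ I, E i)
        simpa using ENNReal.toReal_mono ENNReal.one_ne_top this
      have h1 : (1 - u) * S ^ 2 ≤ 5 * N := by nlinarith [mul_le_mul_of_nonneg_left hT_ub hu0]
      have h2 : ((1 - u) * (p ^ 2 * N)) * N ≤ 5 * N := by
        nlinarith [mul_le_mul_of_nonneg_left (mul_self_le_mul_self (by positivity : (0:ℝ) ≤ p * N) hS_lb) (sub_nonneg.2 hu1)]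
      have h3 : (1 - u) * (p ^ 2 * N) ≤ 5 := le_of_mul_le_mul_right h2 hN0
      have h4 : 1 - u ≤ 5 / (p ^ 2 * N) := by
        rw [le_div_iff₀ (by positivity)]; linarith
      have hsub : (⋃ i ∈ I, E i) ⊆ U := by
        refine Set.iUnion₂_subset fun i hi => ?_
        have hni : n ≤ i := (Finset.mem_Icc.mp hi).1
        exact Set.subset_iUnion₂ (s := fun k (_ : n ≤ k) => E k) i hni
      have := ENNReal.toReal_mono (measure_ne_top μ U) (measure_mono hsub)
      rw [hNdef] at h4
      linarith
    -- take the limit m → ∞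
    have hlim : Tendsto (fun m : ℕ => 1 - 5 / (p ^ 2 * ((m : ℝ) + 1))) atTop (nhds 1) := by
      have h5 : Tendsto (fun m : ℕ => 5 / (p ^ 2 * ((m : ℝ) + 1))) atTop (nhds 0) := by
        have := tendsto_one_div_add_atTop_nhds_zero_nat.const_mul (5 / p ^ 2)
        simp only [mul_zero] at this
        convert this using 2 with m
        field_simp
      have := tendsto_const_nhds (x := (1:ℝ)) (f := atTop (α := ℕ)) |>.sub h5
      simpa using this
    have hone : 1 ≤ (μ U).toReal := le_of_tendsto' hlim main
    refine le_antisymm prob_le_one ?_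
    exact (ENNReal.toReal_le_toReal ENNReal.one_ne_top (measure_ne_top μ U)).mp (by simpa using hone)
  -- Step 2: the limsup is the intersection of the tail unions
  rw [limsup_eq_iInf_iSup_of_nat]
  simp only [Set.iInf_eq_iInter, Set.iSup_eq_iUnion]
  have hFm : ∀ n : ℕ, MeasurableSet (⋃ k, ⋃ (_ : k ≥ n), E k) :=
    fun n => MeasurableSet.iUnion fun k => MeasurableSet.iUnion fun _ => hE k
  rw [← prob_compl_eq_zero_iff (MeasurableSet.iInter hFm), Set.compl_iInter]
  refine measure_iUnion_null fun n => ?_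
  rw [prob_compl_eq_zero_iff (hFm n)]
  exact key n
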